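/- Fix h > 0, α ∈ (0,π), and let Q ⊂ ℝ^n be a closed cube whose diameter is at most (h/8)·tan(α/2), with center y_Q. Let F be a nonempty set of points x = (x', x_{n+1}) ∈ ℝ^{n+1} with x' ∈ Q and x_{n+1} ∈ [−h/10, 0). Then there exists R > 0, independent of F, such that the ball B((y_Q, h/4), R) is contained in Γ_{h,α}(x) ∩ {z_{n+1} < h/2} for every x ∈ F. Consequently the union Ω_F = ⋃_{x∈F} (Γ_{h,α}(x) ∩ {z : z_{n+1} < h/2}) is an open set star-shaped with respect to the ball B((y_Q, h/4), R). -/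

import Mathlib

open Metric MeasureTheory Set Filter
open scoped Topology

noncomputable section

/-- The open truncated cone in `ℝ^n × ℝ` with vertex `x`, axis `e_{n+1}`, direction
`e_{n+1}`, height `h` and aperture `α`. -/
def coneP {n : ℕ} (h α : ℝ) (x : EuclideanSpace ℝ (Fin n) × ℝ) :
    Set (EuclideanSpace ℝ (Fin n) × ℝ) :=
  {z | ‖z.1 - x.1‖ < (z.2 - x.2) * Real.tan (α / 2) ∧ x.2 < z.2 ∧ z.2 < x.2 + h}

private lemma combo_lt_combo {a b u v u' v' : ℝ} (ha : 0 ≤ a) (hb : 0 ≤ b)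
    (hab : a + b = 1) (h1 : u < u') (h2 : v < v') : a * u + b * v < a * u' + b * v' := by
  rcases ha.eq_or_lt with h | h
  · have hb1 : b = 1 := by linarith
    rw [← h, hb1]; simpa using h2
  · have h3 := mul_lt_mul_of_pos_left h1 h
    have h4 := mul_le_mul_of_nonneg_left h2.le hb
    linarith

private lemma coneP_convex {n : ℕ} (h α : ℝ) (x : EuclideanSpace ℝ (Fin n) × ℝ) :
    Convex ℝ (coneP h α x ∩ {z : EuclideanSpace ℝ (Fin n) × ℝ | z.2 < h / 2}) := by
  rintro z ⟨⟨hz1, hz2, hz3⟩, hz4⟩ w ⟨⟨hw1, hw2, hw3⟩, hw4⟩ a b ha hb hab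
  have hfst : (a • z + b • w).1 = a • z.1 + b • w.1 := rfl
  have hsnd : (a • z + b • w).2 = a * z.2 + b * w.2 := rfl
  have hx1 : (a + b) • x.1 = x.1 := by rw [hab, one_smul]
  have key : a • z.1 + b • w.1 - x.1 = a • (z.1 - x.1) + b • (w.1 - x.1) := by
    rw [smul_sub, smul_sub]
    nth_rewrite 1 [← hx1]
    rw [add_smul]; abel
  have hnorm : ‖a • z.1 + b • w.1 - x.1‖ ≤ a * ‖z.1 - x.1‖ + b * ‖w.1 - x.1‖ := by
    rw [key]
    calc ‖a • (z.1 - x.1) + b • (w.1 - x.1)‖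
        ≤ ‖a • (z.1 - x.1)‖ + ‖b • (w.1 - x.1)‖ := norm_add_le _ _
      _ = a * ‖z.1 - x.1‖ + b * ‖w.1 - x.1‖ := by
          rw [norm_smul, norm_smul, Real.norm_of_nonneg ha, Real.norm_of_nonneg hb]
  refine ⟨⟨?_, ?_, ?_⟩, ?_⟩
  · rw [hfst, hsnd]
    calc ‖a • z.1 + b • w.1 - x.1‖ ≤ a * ‖z.1 - x.1‖ + b * ‖w.1 - x.1‖ := hnorm
      _ < a * ((z.2 - x.2) * Real.tan (α / 2)) + b * ((w.2 - x.2) * Real.tan (α / 2)) :=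
          combo_lt_combo ha hb hab hz1 hw1
      _ = (a * z.2 + b * w.2 - x.2) * Real.tan (α / 2) := by
          linear_combination (-(x.2 * Real.tan (α / 2))) * hab
  · rw [hsnd]
    have h1 := combo_lt_combo ha hb hab hz2 hw2
    have h2 : a * x.2 + b * x.2 = x.2 := by rw [← add_mul, hab, one_mul]
    linarith
  · rw [hsnd]
    have h1 := combo_lt_combo ha hb hab hz3 hw3
    have h2 : a * (x.2 + h) + b * (x.2 + h) = x.2 + h := by rw [← add_mul, hab, one_mul]
    linarith
  · show (a • z + b • w).2 < h / 2
    rw [hsnd]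
    have h1 := combo_lt_combo ha hb hab hz4 hw4
    have h2 : a * (h / 2) + b * (h / 2) = h / 2 := by rw [← add_mul, hab, one_mul]
    linarith

private lemma coneP_isOpen {n : ℕ} (h α : ℝ) (x : EuclideanSpace ℝ (Fin n) × ℝ) :
    IsOpen (coneP h α x) := by
  have h1 : IsOpen {z : EuclideanSpace ℝ (Fin n) × ℝ |
      ‖z.1 - x.1‖ < (z.2 - x.2) * Real.tan (α / 2)} :=
    isOpen_lt (by fun_prop) (by fun_prop)
  have h2 : IsOpen {z : EuclideanSpace ℝ (Fin n) × ℝ | x.2 < z.2} :=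
    isOpen_lt (by fun_prop) (by fun_prop)
  have h3 : IsOpen {z : EuclideanSpace ℝ (Fin n) × ℝ | z.2 < x.2 + h} :=
    isOpen_lt (by fun_prop) (by fun_prop)
  have : coneP h α x = {z : EuclideanSpace ℝ (Fin n) × ℝ |
      ‖z.1 - x.1‖ < (z.2 - x.2) * Real.tan (α / 2)} ∩
      ({z : EuclideanSpace ℝ (Fin n) × ℝ | x.2 < z.2} ∩
       {z : EuclideanSpace ℝ (Fin n) × ℝ | z.2 < x.2 + h}) := by
    ext z; simp [coneP, Set.mem_inter_iff, Set.mem_setOf_eq, and_assoc]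
  rw [this]
  exact h1.inter (h2.inter h3)

/-- Claim 4.4: the union of the truncated cones over the points of `F` above a fixed
cube is star-shaped with respect to a ball, with radius independent of `F`. -/
theorem stmt3 {n : ℕ} (h α : ℝ) (hh : 0 < h) (hα : α ∈ Set.Ioo 0 Real.pi)
    (Q : Set (EuclideanSpace ℝ (Fin n))) (yQ : EuclideanSpace ℝ (Fin n))
    (hQ : ∃ s : ℝ, 0 ≤ s ∧ Q = {y | ∀ i, |y i - yQ i| ≤ s / 2})
    (hdiam : Metric.diam Q ≤ h / 8 * Real.tan (α / 2)) :
    ∃ R : ℝ, 0 < R ∧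
      ∀ F : Set (EuclideanSpace ℝ (Fin n) × ℝ), F.Nonempty →
        (∀ x ∈ F, x.1 ∈ Q ∧ x.2 ∈ Set.Ico (-(h / 10)) 0) →
        (∀ x ∈ F,
          ball ((yQ, h / 4) : EuclideanSpace ℝ (Fin n) × ℝ) R ⊆
            coneP h α x ∩ {z : EuclideanSpace ℝ (Fin n) × ℝ | z.2 < h / 2}) ∧
        IsOpen (⋃ x ∈ F, coneP h α x ∩ {z : EuclideanSpace ℝ (Fin n) × ℝ | z.2 < h / 2}) ∧
        ∀ z ∈ ⋃ x ∈ F, coneP h α x ∩ {z : EuclideanSpace ℝ (Fin n) × ℝ | z.2 < h / 2},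
          ∀ w ∈ ball ((yQ, h / 4) : EuclideanSpace ℝ (Fin n) × ℝ) R,
            segment ℝ w z ⊆
              ⋃ x ∈ F, coneP h α x ∩ {z : EuclideanSpace ℝ (Fin n) × ℝ | z.2 < h / 2} := by
  obtain ⟨hα0, hαπ⟩ := hα
  set t := Real.tan (α / 2) with ht
  have ht0 : 0 < t := Real.tan_pos_of_pos_of_lt_pi_div_two (by linarith) (by linarith)
  -- yQ ∈ Q and Q is bounded
  obtain ⟨s, hs, hQeq⟩ := hQ
  have hyQmem : yQ ∈ Q := by
    rw [hQeq]; intro i; simp; linarith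
  have hQbdd : Bornology.IsBounded Q := by
    apply (Metric.isBounded_closedBall (x := yQ) (r := Real.sqrt (n * s ^ 2))).subset
    intro y hy
    rw [hQeq] at hy
    rw [Metric.mem_closedBall, EuclideanSpace.dist_eq]
    apply Real.sqrt_le_sqrt
    calc (∑ i, dist (y i) (yQ i) ^ 2) ≤ ∑ _i : Fin n, s ^ 2 := by
          apply Finset.sum_le_sum
          intro i _
          have h1 : dist (y i) (yQ i) ≤ s := by
            rw [Real.dist_eq]; have := hy i; linarith
          nlinarith [dist_nonneg (x := y i) (y := yQ i)]
      _ = n * s ^ 2 := by simp [Finset.sum_const, Finset.card_univ]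
  have hdistQ : ∀ y ∈ Q, dist y yQ ≤ h / 8 * t :=
    fun y hy => (Metric.dist_le_diam_of_mem hQbdd hy hyQmem).trans hdiam
  -- the radius
  set R := h * t / (8 * (1 + t)) with hR
  have hR0 : 0 < R := by
    apply div_pos (by positivity) (by positivity)
  have hReq : R * (1 + t) = h * t / 8 := by
    rw [hR]; field_simp
  have hRlt : R < h / 8 := by
    rw [hR, div_lt_div_iff₀ (by positivity) (by norm_num)]
    nlinarith
  refine ⟨R, hR0, ?_⟩
  intro F hFne hF
  -- the key ball inclusion
  have hball : ∀ x ∈ F, ball ((yQ, h / 4) : EuclideanSpace ℝ (Fin n) × ℝ) R ⊆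
      coneP h α x ∩ {z : EuclideanSpace ℝ (Fin n) × ℝ | z.2 < h / 2} := by
    intro x hx z hz
    have hxQ := (hF x hx).1
    have hx2lo := (hF x hx).2.1
    have hx2hi := (hF x hx).2.2
    rw [Metric.mem_ball, Prod.dist_eq, max_lt_iff] at hz
    obtain ⟨hz1, hz2⟩ := hz
    rw [Real.dist_eq, abs_lt] at hz2
    have hd1 : dist z.1 x.1 ≤ dist z.1 yQ + dist x.1 yQ := dist_triangle_right _ _ _
    have hd2 : dist x.1 yQ ≤ h / 8 * t := hdistQ x.1 hxQ
    have hzx : ‖z.1 - x.1‖ < R + h / 8 * t := by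
      rw [← dist_eq_norm]; linarith
    refine ⟨⟨?_, ?_, ?_⟩, ?_⟩
    · have h1 : z.2 - x.2 > h / 4 - R := by linarith
      have h2 : (h / 4 - R) * t = R + h / 8 * t := by nlinarith [hReq]
      calc ‖z.1 - x.1‖ < R + h / 8 * t := hzx
        _ = (h / 4 - R) * t := h2.symm
        _ < (z.2 - x.2) * t := by nlinarith
    · linarith
    · linarith
    · show z.2 < h / 2; linarith
  refine ⟨hball, ?_, ?_⟩
  · exact isOpen_biUnion fun x _ =>
      (coneP_isOpen h α x).inter (isOpen_lt (by fun_prop) (by fun_prop))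
  · intro z hz w hw
    rw [Set.mem_iUnion₂] at hz
    obtain ⟨x, hxF, hzx⟩ := hz
    have hw' : w ∈ coneP h α x ∩ {z : EuclideanSpace ℝ (Fin n) × ℝ | z.2 < h / 2} :=
      hball x hxF hw
    intro p hp
    have := (coneP_convex h α x).segment_subset hw' hzx hp
    exact Set.mem_biUnion hxF this
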